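/- The cuboctahedron graph is not 5-gonal: there exist five vertices a, b, c, x, y such that d(x,y) + d(a,b) + d(a,c) + d(b,c) > d(x,a) + d(x,b) + d(x,c) + d(y,a) + d(y,b) + d(y,c), where d is the graph distance. Consequently, the cuboctahedron graph admits no embedding with any scale λ ≥ 1 into any ℤ^n. -/
import Mathlib


/-- The vertices of the cuboctahedron: the 12 points of `ℤ^3` that are coordinate
permutations of `(±1, ±1, 0)`. -/
def CuboctaVertex (v : Fin 3 → ℤ) : Prop :=
  ∃ σ : Equiv.Perm (Fin 3), |v (σ 0)| = 1 ∧ |v (σ 1)| = 1 ∧ v (σ 2) = 0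

/-- The cuboctahedron graph: vertices as above, adjacent iff the squared Euclidean
distance equals 2. -/
def cuboctahedronGraph : SimpleGraph {v : Fin 3 → ℤ // CuboctaVertex v} :=
  SimpleGraph.fromRel (fun v w => ∑ i, (v.val i - w.val i) ^ 2 = 2)

section Aux

abbrev CV := {v : Fin 3 → ℤ // CuboctaVertex v}

/-- a = (-1,-1,0) -/
def cvA : CV := ⟨![-1, -1, 0], ⟨Equiv.refl _, by decide⟩⟩
/-- b = (-1,1,0) -/
def cvB : CV := ⟨![-1, 1, 0], ⟨Equiv.refl _, by decide⟩⟩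
/-- c = (1,-1,0) -/
def cvC : CV := ⟨![1, -1, 0], ⟨Equiv.refl _, by decide⟩⟩
/-- x = (-1,0,-1) -/
def cvX : CV := ⟨![-1, 0, -1], ⟨Equiv.swap 1 2, by decide⟩⟩
/-- y = (-1,0,1) -/
def cvY : CV := ⟨![-1, 0, 1], ⟨Equiv.swap 1 2, by decide⟩⟩
/-- m1 = (0,-1,-1), midpoint vertex for x–c -/
def cvM1 : CV := ⟨![0, -1, -1], ⟨Equiv.swap 0 2, by decide⟩⟩
/-- m2 = (0,-1,1), midpoint vertex for y–c -/
def cvM2 : CV := ⟨![0, -1, 1], ⟨Equiv.swap 0 2, by decide⟩⟩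

lemma cuboctaVertex_sumsq {v : Fin 3 → ℤ} (hv : CuboctaVertex v) :
    v 0 ^ 2 + v 1 ^ 2 + v 2 ^ 2 = 2 := by
  obtain ⟨σ, h0, h1, h2⟩ := hv
  have hs := Equiv.sum_comp σ (fun i => v i ^ 2)
  rw [Fin.sum_univ_three, Fin.sum_univ_three] at hs
  have e0 : v (σ 0) ^ 2 = 1 := by rw [← sq_abs, h0]; norm_num
  have e1 : v (σ 1) ^ 2 = 1 := by rw [← sq_abs, h1]; norm_num
  rw [e0, e1, h2] at hs
  linarith

lemma adj_dot {u w : CV} (h : cuboctahedronGraph.Adj u w) :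
    u.val 0 * w.val 0 + u.val 1 * w.val 1 + u.val 2 * w.val 2 = 1 := by
  have hu := cuboctaVertex_sumsq u.2
  have hw := cuboctaVertex_sumsq w.2
  rcases h with ⟨hne, h | h⟩ <;>
  · rw [Fin.sum_univ_three] at h
    nlinarith [h, hu, hw]

lemma adj_XA : cuboctahedronGraph.Adj cvX cvA := by
  refine ⟨Subtype.coe_ne_coe.mp (by decide), Or.inl ?_⟩
  simp [cvX, cvA, Fin.sum_univ_three]

lemma adj_XB : cuboctahedronGraph.Adj cvX cvB := by
  refine ⟨Subtype.coe_ne_coe.mp (by decide), Or.inl ?_⟩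
  simp [cvX, cvB, Fin.sum_univ_three]

lemma adj_YA : cuboctahedronGraph.Adj cvY cvA := by
  refine ⟨Subtype.coe_ne_coe.mp (by decide), Or.inl ?_⟩
  simp [cvY, cvA, Fin.sum_univ_three]

lemma adj_YB : cuboctahedronGraph.Adj cvY cvB := by
  refine ⟨Subtype.coe_ne_coe.mp (by decide), Or.inl ?_⟩
  simp [cvY, cvB, Fin.sum_univ_three]

lemma adj_XM1 : cuboctahedronGraph.Adj cvX cvM1 := by
  refine ⟨Subtype.coe_ne_coe.mp (by decide), Or.inl ?_⟩
  simp [cvX, cvM1, Fin.sum_univ_three]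

lemma adj_M1C : cuboctahedronGraph.Adj cvM1 cvC := by
  refine ⟨Subtype.coe_ne_coe.mp (by decide), Or.inl ?_⟩
  simp [cvM1, cvC, Fin.sum_univ_three]

lemma adj_YM2 : cuboctahedronGraph.Adj cvY cvM2 := by
  refine ⟨Subtype.coe_ne_coe.mp (by decide), Or.inl ?_⟩
  simp [cvY, cvM2, Fin.sum_univ_three]

lemma adj_M2C : cuboctahedronGraph.Adj cvM2 cvC := by
  refine ⟨Subtype.coe_ne_coe.mp (by decide), Or.inl ?_⟩
  simp [cvM2, cvC, Fin.sum_univ_three]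

lemma nadj (u w : CV) (h : ∑ i, (u.val i - w.val i) ^ 2 ≠ 2) :
    ¬ cuboctahedronGraph.Adj u w := by
  rintro ⟨hne, hs | hs⟩
  · exact h hs
  · apply h
    rw [← hs]
    apply Finset.sum_congr rfl
    intro i _
    ring

-- upper bounds
lemma dist_XA : cuboctahedronGraph.dist cvX cvA ≤ 1 :=
  le_of_eq (SimpleGraph.dist_eq_one_iff_adj.mpr adj_XA)

lemma dist_XB : cuboctahedronGraph.dist cvX cvB ≤ 1 :=
  le_of_eq (SimpleGraph.dist_eq_one_iff_adj.mpr adj_XB)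

lemma dist_YA : cuboctahedronGraph.dist cvY cvA ≤ 1 :=
  le_of_eq (SimpleGraph.dist_eq_one_iff_adj.mpr adj_YA)

lemma dist_YB : cuboctahedronGraph.dist cvY cvB ≤ 1 :=
  le_of_eq (SimpleGraph.dist_eq_one_iff_adj.mpr adj_YB)

lemma dist_XC : cuboctahedronGraph.dist cvX cvC ≤ 2 := by
  have h := SimpleGraph.dist_le ((adj_XM1.toWalk).append adj_M1C.toWalk)
  simpa using h

lemma dist_YC : cuboctahedronGraph.dist cvY cvC ≤ 2 := by
  have h := SimpleGraph.dist_le ((adj_YM2.toWalk).append adj_M2C.toWalk)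
  simpa using h

-- lower bounds
lemma dist_ge_two {u w : CV} (hr : cuboctahedronGraph.Reachable u w) (hne : u ≠ w)
    (hna : ¬ cuboctahedronGraph.Adj u w) : 2 ≤ cuboctahedronGraph.dist u w := by
  have h0 := hr.pos_dist_of_ne hne
  have h1 : cuboctahedronGraph.dist u w ≠ 1 := fun h =>
    hna (SimpleGraph.dist_eq_one_iff_adj.mp h)
  omega

lemma dist_XY : 2 ≤ cuboctahedronGraph.dist cvX cvY := by
  refine dist_ge_two ⟨(adj_XA.toWalk).append adj_YA.toWalk.reverse⟩
    (Subtype.coe_ne_coe.mp (by decide)) (nadj _ _ ?_)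
  simp [cvX, cvY, Fin.sum_univ_three]

lemma dist_AB : 2 ≤ cuboctahedronGraph.dist cvA cvB := by
  refine dist_ge_two ⟨(adj_XA.toWalk.reverse).append adj_XB.toWalk⟩
    (Subtype.coe_ne_coe.mp (by decide)) (nadj _ _ ?_)
  simp [cvA, cvB, Fin.sum_univ_three]

lemma dist_AC : 2 ≤ cuboctahedronGraph.dist cvA cvC := by
  refine dist_ge_two ⟨(adj_XA.toWalk.reverse).append ((adj_XM1.toWalk).append adj_M1C.toWalk)⟩
    (Subtype.coe_ne_coe.mp (by decide)) (nadj _ _ ?_)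
  simp [cvA, cvC, Fin.sum_univ_three]

lemma walk_len2 {V : Type*} {G : SimpleGraph V} :
    ∀ {u w : V} (p : G.Walk u w), p.length = 2 → ∃ z, G.Adj u z ∧ G.Adj z w := by
  intro u w p hp
  cases p with
  | nil => simp at hp
  | cons h q =>
    cases q with
    | nil => simp at hp
    | cons h' r =>
      cases r with
      | nil => exact ⟨_, h, h'⟩
      | cons h'' s => simp at hp

lemma dist_BC : 3 ≤ cuboctahedronGraph.dist cvB cvC := by
  have hne : cvB ≠ cvC := Subtype.coe_ne_coe.mp (by decide)
  have hr : cuboctahedronGraph.Reachable cvB cvC :=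
    ⟨(adj_XB.toWalk.reverse).append ((adj_XM1.toWalk).append adj_M1C.toWalk)⟩
  have h0 := hr.pos_dist_of_ne hne
  have h1 : cuboctahedronGraph.dist cvB cvC ≠ 1 := by
    intro h
    have hadj := SimpleGraph.dist_eq_one_iff_adj.mp h
    have := adj_dot hadj
    simp [cvB, cvC] at this
  have h2 : cuboctahedronGraph.dist cvB cvC ≠ 2 := by
    intro h
    obtain ⟨p, hp⟩ := cuboctahedronGraph.exists_walk_of_dist_ne_zero (by omega :
      cuboctahedronGraph.dist cvB cvC ≠ 0)
    rw [h] at hp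
    obtain ⟨z, hz1, hz2⟩ := walk_len2 p hp
    have d1 := adj_dot hz1
    have d2 := adj_dot hz2
    simp only [cvB, cvC, Matrix.cons_val_zero, Matrix.cons_val_one, Matrix.head_cons,
      Matrix.cons_val_two, Matrix.tail_cons] at d1 d2
    nlinarith [d1, d2]
  omega

lemma key_ineq :
    cuboctahedronGraph.dist cvX cvA + cuboctahedronGraph.dist cvX cvB +
        cuboctahedronGraph.dist cvX cvC + cuboctahedronGraph.dist cvY cvA +
        cuboctahedronGraph.dist cvY cvB + cuboctahedronGraph.dist cvY cvC <
      cuboctahedronGraph.dist cvX cvY + cuboctahedronGraph.dist cvA cvB +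
        cuboctahedronGraph.dist cvA cvC + cuboctahedronGraph.dist cvB cvC := by
  have := dist_XA; have := dist_XB; have := dist_XC
  have := dist_YA; have := dist_YB; have := dist_YC
  have := dist_XY; have := dist_AB; have := dist_AC; have := dist_BC
  omega

lemma fiveGonal_int (x y a b c : ℤ) :
    |x-y| + |a-b| + |a-c| + |b-c| ≤ |x-a| + |x-b| + |x-c| + |y-a| + |y-b| + |y-c| := by
  simp only [Int.abs_eq_natAbs]
  omega

end Aux

/-- The cuboctahedron graph is not 5-gonal, and consequently admits no
embedding with any scale `λ ≥ 1` into any `ℤ^n`. -/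
theorem cuboctahedron_not_five_gonal_not_embeddable :
    (∃ a b c x y : {v : Fin 3 → ℤ // CuboctaVertex v},
      cuboctahedronGraph.dist x a + cuboctahedronGraph.dist x b +
          cuboctahedronGraph.dist x c + cuboctahedronGraph.dist y a +
          cuboctahedronGraph.dist y b + cuboctahedronGraph.dist y c <
        cuboctahedronGraph.dist x y + cuboctahedronGraph.dist a b +
          cuboctahedronGraph.dist a c + cuboctahedronGraph.dist b c) ∧
    ∀ (n lam : ℕ), 1 ≤ lam →
      ¬ ∃ f : {v : Fin 3 → ℤ // CuboctaVertex v} → Fin n → ℤ,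
          ∀ u v, (lam : ℤ) * (cuboctahedronGraph.dist u v : ℤ) =
            ∑ i, |f u i - f v i| := by
  constructor
  · exact ⟨cvA, cvB, cvC, cvX, cvY, key_ineq⟩
  · rintro n lam hlam ⟨f, hf⟩
    set G := cuboctahedronGraph
    have hsum : (lam : ℤ) * (G.dist cvX cvY : ℤ) + (lam : ℤ) * (G.dist cvA cvB : ℤ) +
        (lam : ℤ) * (G.dist cvA cvC : ℤ) + (lam : ℤ) * (G.dist cvB cvC : ℤ) ≤
        (lam : ℤ) * (G.dist cvX cvA : ℤ) + (lam : ℤ) * (G.dist cvX cvB : ℤ) +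
        (lam : ℤ) * (G.dist cvX cvC : ℤ) + (lam : ℤ) * (G.dist cvY cvA : ℤ) +
        (lam : ℤ) * (G.dist cvY cvB : ℤ) + (lam : ℤ) * (G.dist cvY cvC : ℤ) := by
      rw [hf cvX cvY, hf cvA cvB, hf cvA cvC, hf cvB cvC, hf cvX cvA, hf cvX cvB,
        hf cvX cvC, hf cvY cvA, hf cvY cvB, hf cvY cvC]
      rw [← Finset.sum_add_distrib, ← Finset.sum_add_distrib, ← Finset.sum_add_distrib,
        ← Finset.sum_add_distrib, ← Finset.sum_add_distrib, ← Finset.sum_add_distrib,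
        ← Finset.sum_add_distrib, ← Finset.sum_add_distrib]
      exact Finset.sum_le_sum fun i _ => fiveGonal_int (f cvX i) (f cvY i) (f cvA i)
        (f cvB i) (f cvC i)
    have hkey := key_ineq
    have hcast : (lam : ℤ) * ((G.dist cvX cvY + G.dist cvA cvB + G.dist cvA cvC +
        G.dist cvB cvC : ℕ) : ℤ) ≤ (lam : ℤ) * ((G.dist cvX cvA + G.dist cvX cvB +
        G.dist cvX cvC + G.dist cvY cvA + G.dist cvY cvB + G.dist cvY cvC : ℕ) : ℤ) := by
      push_cast
      linarith
    have hL : ((cuboctahedronGraph.dist cvX cvA + cuboctahedronGraph.dist cvX cvB +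
        cuboctahedronGraph.dist cvX cvC + cuboctahedronGraph.dist cvY cvA +
        cuboctahedronGraph.dist cvY cvB + cuboctahedronGraph.dist cvY cvC : ℕ) : ℤ) <
        ((cuboctahedronGraph.dist cvX cvY + cuboctahedronGraph.dist cvA cvB +
        cuboctahedronGraph.dist cvA cvC + cuboctahedronGraph.dist cvB cvC : ℕ) : ℤ) := by
      exact_mod_cast hkey
    have hlam' : (1 : ℤ) ≤ (lam : ℤ) := by exact_mod_cast hlam
    push_cast at hL hcast
    nlinarith [hL, hcast, hlam']
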